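/- For the undelayed system S' = μ(1−S) − β(g(I))IS, I' = β(g(I))IS − (μ+ν)I with R₀ = β(0)/(μ+ν) > 1, the unique endemic equilibrium is globally asymptotically stable in the region {S > 0, I > 0, S + I ≤ 1}: it is locally asymptotically stable and, since Dulac's criterion rules out periodic orbits, every trajectory starting with I(0) > 0, S(0) > 0 converges to (S_e, I_e). -/

import Mathlib

open Filter Topology Set

/-- Monotone on a convex set from pointwise derivative nonneg. -/
lemma myMonoOn {D : Set ℝ} (hD : Convex ℝ D) {f f' : ℝ → ℝ}
    (hf : ∀ t ∈ D, HasDerivAt f (f' t) t) (h0 : ∀ t ∈ D, 0 ≤ f' t) :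
    MonotoneOn f D := by
  apply monotoneOn_of_deriv_nonneg hD
  · exact fun t ht => (hf t ht).continuousAt.continuousWithinAt
  · exact fun t ht => ((hf t (interior_subset ht)).differentiableAt).differentiableWithinAt
  · intro t ht
    rw [(hf t (interior_subset ht)).deriv]
    exact h0 t (interior_subset ht)

lemma myAntiOn {D : Set ℝ} (hD : Convex ℝ D) {f f' : ℝ → ℝ}
    (hf : ∀ t ∈ D, HasDerivAt f (f' t) t) (h0 : ∀ t ∈ D, f' t ≤ 0) :
    AntitoneOn f D := by
  apply antitoneOn_of_deriv_nonpos hD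
  · exact fun t ht => (hf t ht).continuousAt.continuousWithinAt
  · exact fun t ht => ((hf t (interior_subset ht)).differentiableAt).differentiableWithinAt
  · intro t ht
    rw [(hf t (interior_subset ht)).deriv]
    exact h0 t (interior_subset ht)

/-- FTC: derivative of an interval integral of a function continuous on an open set. -/
lemma myFTC {s : Set ℝ} (hs : IsOpen s) {φ : ℝ → ℝ} (hφ : ContinuousOn φ s)
    {a x : ℝ} (hsub : Set.uIcc a x ⊆ s) (hx : x ∈ s) :
    HasDerivAt (fun v => ∫ t in a..v, φ t) (φ x) x :=
  intervalIntegral.integral_hasDerivAt_right ((hφ.mono hsub).intervalIntegrable)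
    (hφ.stronglyMeasurableAtFilter hs x hx) (hφ.continuousAt (hs.mem_nhds hx))

noncomputable section

/-- incidence coefficient `f(v) = β (g v)` -/
def ffn (β g : ℝ → ℝ) : ℝ → ℝ := fun v => β (g v)
/-- its derivative -/
def ffd (β g : ℝ → ℝ) : ℝ → ℝ := fun v => deriv β (g v) * deriv g v
/-- the `I`-nullcline `σ(v) = (μ+ν)/f v` -/
def sgm (μ ν : ℝ) (β g : ℝ → ℝ) : ℝ → ℝ := fun v => (μ + ν) / ffn β g v
/-- derivative of `σ` -/
def sgd (μ ν : ℝ) (β g : ℝ → ℝ) : ℝ → ℝ :=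
  fun v => -((μ + ν) * ffd β g v) / (ffn β g v) ^ 2
/-- `h(v) = μ(1-σ v) - (μ+ν) v` -/
def hfn (μ ν : ℝ) (β g : ℝ → ℝ) : ℝ → ℝ :=
  fun v => μ * (1 - sgm μ ν β g v) - (μ + ν) * v
/-- damping coefficient -/
def cfn (μ ν : ℝ) (β g : ℝ → ℝ) : ℝ → ℝ :=
  fun v => μ + ffn β g v * v + sgd μ ν β g v * (ffn β g v * v)
/-- integrand of the potential -/
def pfn (μ ν : ℝ) (β g : ℝ → ℝ) : ℝ → ℝ :=
  fun v => -hfn μ ν β g v / (ffn β g v * v)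
/-- the potential `H` -/
def Hfn (μ ν : ℝ) (β g : ℝ → ℝ) (Ie : ℝ) : ℝ → ℝ :=
  fun v => ∫ s in Ie..v, pfn μ ν β g s

variable {μ ν : ℝ} {β g : ℝ → ℝ}

section basics
variable (hβC1 : ContDiff ℝ 1 β) (hgC1 : ContDiff ℝ 1 g)
  (hβpos : ∀ m, 0 < β m) (hβ' : ∀ m, deriv β m < 0) (hg' : ∀ i, 0 < deriv g i)
  (hμ : 0 < μ) (hν : 0 < ν)

include hβpos in
lemma ffn_pos (v : ℝ) : 0 < ffn β g v := hβpos _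

include hβC1 hgC1 in
lemma hasDerivAt_ffn (v : ℝ) : HasDerivAt (ffn β g) (ffd β g v) v :=
  ((hβC1.differentiable one_ne_zero).differentiableAt.hasDerivAt).comp v
    ((hgC1.differentiable one_ne_zero).differentiableAt.hasDerivAt)

include hβ' hg' in
lemma ffd_neg (v : ℝ) : ffd β g v < 0 := mul_neg_of_neg_of_pos (hβ' _) (hg' _)

include hμ hν hβpos hβ' hg' in
lemma sgd_pos (v : ℝ) : 0 < sgd μ ν β g v := by
  have h1 : (μ + ν) * ffd β g v < 0 :=
    mul_neg_of_pos_of_neg (by linarith) (ffd_neg hβ' hg' v)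
  have h2 : (0:ℝ) < (ffn β g v) ^ 2 := by
    have := hβpos (g v); simp only [ffn]; positivity
  unfold sgd
  exact div_pos (by linarith) h2

include hβC1 hgC1 hβpos in
lemma hasDerivAt_sgm (v : ℝ) : HasDerivAt (sgm μ ν β g) (sgd μ ν β g v) v := by
  have h := (hasDerivAt_const v (μ + ν)).div (hasDerivAt_ffn hβC1 hgC1 v)
    (ne_of_gt (hβpos _))
  refine h.congr_deriv (Eq.symm ?_)
  unfold sgd ffn
  field_simp
  ring

include hβC1 hgC1 hβpos in
lemma hasDerivAt_hfn (v : ℝ) :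
    HasDerivAt (hfn μ ν β g) (-(μ * sgd μ ν β g v) - (μ + ν)) v := by
  have h := ((hasDerivAt_sgm (μ := μ) (ν := ν) hβC1 hgC1 hβpos v).const_sub 1).const_mul μ
  have h2 := h.sub ((hasDerivAt_id v).const_mul (μ + ν))
  refine h2.congr_deriv (Eq.symm ?_)
  ring

include hβC1 hgC1 hβpos hβ' hg' hμ hν in
lemma hfn_strictAnti : StrictAnti (hfn μ ν β g) := by
  apply strictAnti_of_deriv_neg
  intro v
  rw [(hasDerivAt_hfn hβC1 hgC1 hβpos v).deriv]
  have := sgd_pos (μ := μ) (ν := ν) (β := β) (g := g) hβpos hβ' hg' hμ hν v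
  nlinarith

include hβC1 hgC1 in
lemma cont_ffn : Continuous (ffn β g) := hβC1.continuous.comp hgC1.continuous

include hβC1 hgC1 in
lemma cont_ffd : Continuous (ffd β g) :=
  ((hβC1.continuous_deriv le_rfl).comp hgC1.continuous).mul (hgC1.continuous_deriv le_rfl)

include hβC1 hgC1 hβpos in
lemma cont_sgm : Continuous (sgm μ ν β g) :=
  continuous_const.div (cont_ffn hβC1 hgC1) fun v => ne_of_gt (hβpos _)

include hβC1 hgC1 hβpos in
lemma cont_sgd : Continuous (sgd μ ν β g) :=
  (continuous_const.mul (cont_ffd hβC1 hgC1)).neg.div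
    ((cont_ffn hβC1 hgC1).pow 2) fun v => by
      have := hβpos (g v); simp only [ffn]; positivity

include hβC1 hgC1 hβpos in
lemma cont_hfn : Continuous (hfn μ ν β g) := by
  unfold hfn
  exact (continuous_const.mul (continuous_const.sub (cont_sgm hβC1 hgC1 hβpos))).sub
    (continuous_const.mul continuous_id)

include hβC1 hgC1 hβpos in
lemma cont_cfn : Continuous (cfn μ ν β g) := by
  unfold cfn
  exact (continuous_const.add ((cont_ffn hβC1 hgC1).mul continuous_id)).add
    ((cont_sgd hβC1 hgC1 hβpos).mul ((cont_ffn hβC1 hgC1).mul continuous_id))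

include hβC1 hgC1 hβpos in
lemma contOn_pfn : ContinuousOn (pfn μ ν β g) (Set.Ioi 0) := by
  apply ContinuousOn.div ((cont_hfn hβC1 hgC1 hβpos).neg.continuousOn)
    (((cont_ffn hβC1 hgC1).mul continuous_id).continuousOn)
  intro v hv
  have : (0:ℝ) < v := hv
  have := hβpos (g v)
  simp only [Pi.mul_apply, ffn, id]
  positivity

include hβC1 hgC1 hβpos in
lemma hasDerivAt_Hfn {Ie v : ℝ} (hIe : 0 < Ie) (hv : 0 < v) :
    HasDerivAt (Hfn μ ν β g Ie) (pfn μ ν β g v) v := by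
  apply myFTC isOpen_Ioi (contOn_pfn hβC1 hgC1 hβpos) _ hv
  intro x hx
  rcases Set.mem_uIcc.1 hx with h | h <;> · simp only [Set.mem_Ioi]; linarith

end basics

section Hmono
variable {Ie : ℝ}
variable (hβC1 : ContDiff ℝ 1 β) (hgC1 : ContDiff ℝ 1 g)
  (hβpos : ∀ m, 0 < β m) (hβ' : ∀ m, deriv β m < 0) (hg' : ∀ i, 0 < deriv g i)
  (hμ : 0 < μ) (hν : 0 < ν)

lemma Hfn_Ie : Hfn μ ν β g Ie Ie = 0 := intervalIntegral.integral_same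

include hβC1 hgC1 hβpos hβ' hg' hμ hν in
lemma Hfn_strictAntiOn (hIe0 : 0 < Ie) (hhIe : hfn μ ν β g Ie = 0) :
    StrictAntiOn (Hfn μ ν β g Ie) (Set.Ioc 0 Ie) := by
  apply strictAntiOn_of_deriv_neg (convex_Ioc 0 Ie)
  · intro x hx
    exact (hasDerivAt_Hfn hβC1 hgC1 hβpos hIe0 hx.1).continuousAt.continuousWithinAt
  · intro x hx
    rw [interior_Ioc] at hx
    rw [(hasDerivAt_Hfn hβC1 hgC1 hβpos hIe0 hx.1).deriv]
    have hx2 : 0 < hfn μ ν β g x := by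
      have h := (hfn_strictAnti hβC1 hgC1 hβpos hβ' hg' hμ hν) hx.2
      rw [hhIe] at h; exact h
    have hd : 0 < ffn β g x * x := mul_pos (hβpos _) hx.1
    exact div_neg_of_neg_of_pos (by linarith) hd

include hβC1 hgC1 hβpos hβ' hg' hμ hν in
lemma Hfn_strictMonoOn (hIe0 : 0 < Ie) (hhIe : hfn μ ν β g Ie = 0) :
    StrictMonoOn (Hfn μ ν β g Ie) (Set.Ici Ie) := by
  apply strictMonoOn_of_deriv_pos (convex_Ici Ie)
  · intro x hx
    exact (hasDerivAt_Hfn hβC1 hgC1 hβpos hIe0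
      (lt_of_lt_of_le hIe0 hx)).continuousAt.continuousWithinAt
  · intro x hx
    rw [interior_Ici] at hx
    have hx0 : (0:ℝ) < x := lt_trans hIe0 hx
    rw [(hasDerivAt_Hfn hβC1 hgC1 hβpos hIe0 hx0).deriv]
    have hx2 : hfn μ ν β g x < 0 := by
      have h := (hfn_strictAnti hβC1 hgC1 hβpos hβ' hg' hμ hν) hx
      rw [hhIe] at h; exact h
    have hd : 0 < ffn β g x * x := mul_pos (hβpos _) hx0
    exact div_pos (by linarith) hd

end Hmono

end

set_option maxHeartbeats 4000000 in
/-- for the undelayed system with `R₀ > 1`, the unique endemic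
equilibrium `(S_e, I_e)` is globally asymptotically stable in
`{S > 0, I > 0, S + I ≤ 1}`: every such trajectory converges to it. -/
theorem undelayed_endemic_GAS
    (μ ν : ℝ) (hμ : 0 < μ) (hν : 0 < ν)
    (β g : ℝ → ℝ)
    (hβC1 : ContDiff ℝ 1 β) (hgC1 : ContDiff ℝ 1 g)
    (hβpos : ∀ m, 0 < β m) (hβ' : ∀ m, deriv β m < 0)
    (hg0 : g 0 = 0) (hg' : ∀ i, 0 < deriv g i)
    (hR0 : 1 < β 0 / (μ + ν))
    (Se Ie : ℝ) (hIe : Ie ∈ Set.Ioo (0:ℝ) 1)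
    (hSe : Se = (μ + ν) / β (g Ie))
    (heq : μ * (1 - (μ + ν) / β (g Ie)) - (μ + ν) * Ie = 0)
    (S I : ℝ → ℝ)
    (hS : ∀ t, 0 ≤ t → HasDerivAt S (μ * (1 - S t) - β (g (I t)) * I t * S t) t)
    (hI : ∀ t, 0 ≤ t → HasDerivAt I (β (g (I t)) * I t * S t - (μ + ν) * I t) t)
    (hS0 : 0 < S 0) (hI0 : 0 < I 0) (hSI0 : S 0 + I 0 ≤ 1) :
    Tendsto S atTop (𝓝 Se) ∧ Tendsto I atTop (𝓝 Ie) := by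
  have hμν : (0:ℝ) < μ + ν := by linarith
  -- equilibrium value of h
  have hhIe : hfn μ ν β g Ie = 0 := heq
  -- continuity of the trajectory on [0,∞)
  have hScont : ContinuousOn S (Ici 0) := fun t ht => ((hS t ht).continuousAt).continuousWithinAt
  have hIcont : ContinuousOn I (Ici 0) := fun t ht => ((hI t ht).continuousAt).continuousWithinAt
  have hmaxc : Continuous (fun t : ℝ => max t 0) := continuous_id.max continuous_const
  have hSSc : Continuous (fun t => S (max t 0)) :=
    hScont.comp_continuous hmaxc fun t => le_max_right t 0
  have hIIc : Continuous (fun t => I (max t 0)) :=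
    hIcont.comp_continuous hmaxc fun t => le_max_right t 0
  -- positivity of I
  have hIpos : ∀ t, 0 ≤ t → 0 < I t := by
    set a : ℝ → ℝ := fun t => β (g (I (max t 0))) * S (max t 0) - (μ + ν) with ha_def
    have hacont : Continuous a :=
      (((hβC1.continuous.comp hgC1.continuous).comp hIIc).mul hSSc).sub continuous_const
    set A : ℝ → ℝ := fun t => ∫ s in (0:ℝ)..t, a s with hA_def
    have hA : ∀ t, HasDerivAt A (a t) t := fun t =>
      myFTC isOpen_univ hacont.continuousOn (subset_univ _) trivial
    set W : ℝ → ℝ := fun t => I t * Real.exp (-A t) with hW_def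
    have hW : ∀ t ∈ Ici (0:ℝ), HasDerivAt W 0 t := by
      intro t ht
      have h1 : HasDerivAt (fun t => Real.exp (-A t)) (Real.exp (-A t) * (-a t)) t :=
        ((hA t).neg).exp
      have h2 := (hI t ht).mul h1
      refine h2.congr_deriv (Eq.symm ?_)
      have hmx : max t 0 = t := max_eq_left ht
      simp only [ha_def, hmx]
      ring
    have hWm := myMonoOn (convex_Ici 0) hW (fun _ _ => le_refl 0)
    have hWa := myAntiOn (convex_Ici 0) hW (fun _ _ => le_refl 0)
    intro t ht
    have hle : W t ≤ W 0 := hWa (self_mem_Ici) ht ht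
    have hge : W 0 ≤ W t := hWm (self_mem_Ici) ht ht
    have hWt : W t = W 0 := le_antisymm hle hge
    have hA0 : A 0 = 0 := intervalIntegral.integral_same
    have h3 : I t * Real.exp (-A t) = I 0 := by
      have := hWt
      simp only [hW_def, hA0, neg_zero, Real.exp_zero, mul_one] at this
      exact this
    have h4 := Real.exp_pos (-A t)
    nlinarith
  -- positivity of S
  have hSpos : ∀ t, 0 ≤ t → 0 < S t := by
    set b : ℝ → ℝ := fun t => μ + β (g (I (max t 0))) * I (max t 0) with hb_def
    have hbcont : Continuous b :=
      continuous_const.add (((hβC1.continuous.comp hgC1.continuous).comp hIIc).mul hIIc)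
    set B : ℝ → ℝ := fun t => ∫ s in (0:ℝ)..t, b s with hB_def
    have hB : ∀ t, HasDerivAt B (b t) t := fun t =>
      myFTC isOpen_univ hbcont.continuousOn (subset_univ _) trivial
    set Z : ℝ → ℝ := fun t => S t * Real.exp (B t) with hZ_def
    have hZ : ∀ t ∈ Ici (0:ℝ), HasDerivAt Z (μ * Real.exp (B t)) t := by
      intro t ht
      have h1 : HasDerivAt (fun t => Real.exp (B t)) (Real.exp (B t) * b t) t := (hB t).exp
      have h2 := (hS t ht).mul h1
      refine h2.congr_deriv (Eq.symm ?_)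
      have hmx : max t 0 = t := max_eq_left ht
      simp only [hb_def, hmx]
      ring
    have hZm := myMonoOn (convex_Ici 0) hZ
      (fun t _ => le_of_lt (mul_pos hμ (Real.exp_pos _)))
    intro t ht
    have hge : Z 0 ≤ Z t := hZm self_mem_Ici ht ht
    have hB0 : B 0 = 0 := intervalIntegral.integral_same
    have h3 : S 0 ≤ S t * Real.exp (B t) := by
      have := hge
      simp only [hZ_def, hB0, Real.exp_zero, mul_one] at this
      exact this
    have h4 := Real.exp_pos (B t)
    nlinarith
  -- S + I ≤ 1
  have hSIle : ∀ t, 0 ≤ t → S t + I t ≤ 1 := by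
    set V : ℝ → ℝ := fun t => (S t + I t - 1) * Real.exp (μ * t) with hV_def
    have hV : ∀ t ∈ Ici (0:ℝ), HasDerivAt V (-(ν * I t) * Real.exp (μ * t)) t := by
      intro t ht
      have h1 : HasDerivAt (fun t : ℝ => Real.exp (μ * t)) (Real.exp (μ * t) * μ) t := by
        have := ((hasDerivAt_id t).const_mul μ).exp
        simpa using this
      have h2 := (((hS t ht).add (hI t ht)).sub_const 1).mul h1
      refine h2.congr_deriv (Eq.symm ?_)
      rw [Pi.add_apply]
      ring
    have hVa := myAntiOn (convex_Ici 0) hV (fun t ht => by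
      have h1 := hIpos t ht
      have h2 := Real.exp_pos (μ * t)
      have h3 : 0 < ν * I t * Real.exp (μ * t) := by positivity
      linarith)
    intro t ht
    have hle : V t ≤ V 0 := hVa self_mem_Ici ht ht
    have hV0 : V 0 = S 0 + I 0 - 1 := by simp [hV_def]
    have h4 := Real.exp_pos (μ * t)
    have h5 : V t = (S t + I t - 1) * Real.exp (μ * t) := rfl
    nlinarith [hle.trans_eq hV0]
  -- derived bounds
  have hIle1 : ∀ t, 0 ≤ t → I t ≤ 1 := fun t ht => by
    have h1 := hSpos t ht; have h2 := hSIle t ht; linarith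
  have hsgmono : StrictMono (sgm μ ν β g) := strictMono_of_deriv_pos fun v => by
    rw [(hasDerivAt_sgm hβC1 hgC1 hβpos v).deriv]
    exact sgd_pos hβpos hβ' hg' hμ hν v
  set u : ℝ → ℝ := fun t => S t - sgm μ ν β g (I t) with hu_def
  set Mu : ℝ := max 1 (sgm μ ν β g 1) with hMu_def
  have hMu1 : 1 ≤ Mu := le_max_left _ _
  have hubnd : ∀ t, 0 ≤ t → |u t| ≤ Mu := by
    intro t ht
    have h1 : 0 < sgm μ ν β g (I t) := div_pos hμν (hβpos _)
    have h2 : sgm μ ν β g (I t) ≤ sgm μ ν β g 1 := hsgmono.monotone (hIle1 t ht)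
    have h3 := hSpos t ht; have h4 := hSIle t ht; have h5 := hIpos t ht
    have h6 : sgm μ ν β g 1 ≤ Mu := le_max_right _ _
    rw [abs_le]
    constructor
    · simp only [hu_def]; linarith
    · simp only [hu_def]; linarith
  obtain ⟨Mh0, hMh0⟩ := (isCompact_Icc (a := (0:ℝ)) (b := 1)).exists_bound_of_continuousOn
    (cont_hfn hβC1 hgC1 hβpos).continuousOn
  set Mh : ℝ := max Mh0 0 with hMh_def
  have hMh : ∀ v ∈ Icc (0:ℝ) 1, |hfn μ ν β g v| ≤ Mh := fun v hv =>
    le_trans (by rw [← Real.norm_eq_abs]; exact hMh0 v hv) (le_max_left _ _)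
  obtain ⟨Mc0, hMc0⟩ := (isCompact_Icc (a := (0:ℝ)) (b := 1)).exists_bound_of_continuousOn
    (cont_cfn hβC1 hgC1 hβpos).continuousOn
  set Mc : ℝ := max Mc0 1 with hMc_def
  have hMc : ∀ v ∈ Icc (0:ℝ) 1, |cfn μ ν β g v| ≤ Mc := fun v hv =>
    le_trans (by rw [← Real.norm_eq_abs]; exact hMc0 v hv) (le_max_left _ _)
  have hMc1 : (1:ℝ) ≤ Mc := le_max_right _ _
  have hImem : ∀ t, 0 ≤ t → I t ∈ Icc (0:ℝ) 1 := fun t ht => ⟨le_of_lt (hIpos t ht), hIle1 t ht⟩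
  have hcge : ∀ t, 0 ≤ t → μ ≤ cfn μ ν β g (I t) := by
    intro t ht
    have h5 := hIpos t ht
    have h6 := hβpos (g (I t))
    have h7 := sgd_pos (μ := μ) (ν := ν) hβpos hβ' hg' hμ hν (I t)
    have h8 : 0 < ffn β g (I t) := hβpos _
    have h9 : 0 < ffn β g (I t) * I t := mul_pos h8 h5
    have h10 : 0 < sgd μ ν β g (I t) * (ffn β g (I t) * I t) := mul_pos h7 h9
    simp only [cfn]
    linarith
  -- derivative of u
  have hu' : ∀ t, 0 ≤ t → HasDerivAt u (hfn μ ν β g (I t) - cfn μ ν β g (I t) * u t) t := by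
    intro t ht
    have h1 := (hS t ht).sub ((hasDerivAt_sgm (μ := μ) (ν := ν) hβC1 hgC1 hβpos (I t)).comp t (hI t ht))
    refine h1.congr_deriv (Eq.symm ?_)
    have hf0 : β (g (I t)) ≠ 0 := ne_of_gt (hβpos _)
    simp only [hu_def, hfn, cfn, sgm, sgd, ffn]
    field_simp
    ring
  -- derivative of I in terms of u
  have hI2 : ∀ t, 0 ≤ t → HasDerivAt I (ffn β g (I t) * I t * u t) t := by
    intro t ht
    convert hI t ht using 1
    have hf0 : β (g (I t)) ≠ 0 := ne_of_gt (hβpos _)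
    simp only [hu_def, sgm, ffn]
    field_simp
  -- derivative of the potential along the trajectory
  have hHI : ∀ t, 0 ≤ t → HasDerivAt (fun s => Hfn μ ν β g Ie (I s))
      (-(hfn μ ν β g (I t)) * u t) t := by
    intro t ht
    have h1 := (hasDerivAt_Hfn (μ := μ) (ν := ν) hβC1 hgC1 hβpos hIe.1 (hIpos t ht)).comp t (hI2 t ht)
    refine h1.congr_deriv (Eq.symm ?_)
    have hf0 : ffn β g (I t) ≠ 0 := ne_of_gt (hβpos _)
    have hi0 : I t ≠ 0 := ne_of_gt (hIpos t ht)
    simp only [pfn]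
    field_simp
  -- the Lyapunov function
  set E : ℝ → ℝ := fun t => u t ^ 2 / 2 + Hfn μ ν β g Ie (I t) with hE_def
  have hE' : ∀ t ∈ Ici (0:ℝ), HasDerivAt E (-(cfn μ ν β g (I t)) * u t ^ 2) t := by
    intro t ht
    have h1 := (((hu' t ht).pow 2).div_const 2).add (hHI t ht)
    refine h1.congr_deriv (Eq.symm ?_)
    push_cast
    ring
  have hEanti : AntitoneOn E (Ici 0) := myAntiOn (convex_Ici 0) hE' (fun t ht => by
    have h2 : (0:ℝ) ≤ u t ^ 2 := sq_nonneg _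
    have h3 := hcge t ht
    nlinarith)
  have hHnn : ∀ v, 0 < v → 0 ≤ Hfn μ ν β g Ie v := by
    intro v hv
    rcases lt_trichotomy v Ie with h | h | h
    · have h1 := (Hfn_strictAntiOn hβC1 hgC1 hβpos hβ' hg' hμ hν hIe.1 hhIe)
        (Set.mem_Ioc.2 ⟨hv, le_of_lt h⟩) (Set.mem_Ioc.2 ⟨hIe.1, le_rfl⟩) h
      rw [Hfn_Ie] at h1
      linarith
    · rw [h, Hfn_Ie]
    · have h1 := (Hfn_strictMonoOn hβC1 hgC1 hβpos hβ' hg' hμ hν hIe.1 hhIe)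
        (Set.mem_Ici.2 le_rfl) (Set.mem_Ici.2 (le_of_lt h)) h
      rw [Hfn_Ie] at h1
      linarith
  have hEnn : ∀ t, 0 ≤ t → 0 ≤ E t := fun t ht =>
    add_nonneg (by positivity) (hHnn _ (hIpos t ht))
  -- integral of u^2
  have hucont : Continuous (fun s => u (max s 0)) := by
    have h1 : ContinuousOn u (Ici 0) := fun t ht => ((hu' t ht).continuousAt).continuousWithinAt
    exact h1.comp_continuous hmaxc fun t => le_max_right t 0
  set F : ℝ → ℝ := fun t => ∫ s in (0:ℝ)..t, (u (max s 0)) ^ 2 with hF_def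
  have hF : ∀ t, HasDerivAt F ((u (max t 0)) ^ 2) t := fun t =>
    myFTC isOpen_univ (hucont.pow 2).continuousOn (subset_univ _) trivial
  have hF' : ∀ t ∈ Ici (0:ℝ), HasDerivAt F (u t ^ 2) t := by
    intro t ht; have h1 := hF t; rwa [max_eq_left ht] at h1
  have hFmono : MonotoneOn F (Ici 0) := myMonoOn (convex_Ici 0) hF' (fun t _ => sq_nonneg _)
  have hEFanti : AntitoneOn (fun t => E t + μ * F t) (Ici 0) := myAntiOn (convex_Ici 0)
    (fun t ht => (hE' t ht).add ((hF' t ht).const_mul μ))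
    (fun t ht => by have h3 := hcge t ht; have h2 := sq_nonneg (u t); nlinarith)
  have hF0 : F 0 = 0 := intervalIntegral.integral_same
  have hFbd : ∀ t, 0 ≤ t → μ * F t ≤ E 0 := by
    intro t ht
    have h1 := hEFanti self_mem_Ici ht ht
    simp only [hF0, mul_zero, add_zero] at h1
    have h2 := hEnn t ht
    linarith
  -- Lipschitz bound for u'
  set K : ℝ := Mh + Mc * Mu with hK_def
  have hMhnn : 0 ≤ Mh := le_max_right _ _
  have hK1 : 1 ≤ K := by nlinarith
  have hKpos : 0 < K := lt_of_lt_of_le one_pos hK1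
  have hKbnd : ∀ t, 0 ≤ t → |hfn μ ν β g (I t) - cfn μ ν β g (I t) * u t| ≤ K := by
    intro t ht
    have h1 : |hfn μ ν β g (I t)| ≤ Mh := hMh _ (hImem t ht)
    have h2 : |cfn μ ν β g (I t)| ≤ Mc := hMc _ (hImem t ht)
    have h3 : |u t| ≤ Mu := hubnd t ht
    have h4 : |hfn μ ν β g (I t) - cfn μ ν β g (I t) * u t| ≤
        |hfn μ ν β g (I t)| + |cfn μ ν β g (I t) * u t| := abs_sub _ _
    rw [abs_mul] at h4
    have h5 : |cfn μ ν β g (I t)| * |u t| ≤ Mc * Mu := by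
      have := abs_nonneg (cfn μ ν β g (I t)); have := abs_nonneg (u t); nlinarith
    rw [hK_def]; linarith
  have humono : MonotoneOn (fun s => u s + K * s) (Ici 0) := myMonoOn (convex_Ici 0)
    (fun t ht => (hu' t ht).add ((hasDerivAt_id t).const_mul K))
    (fun t ht => by have h1 := (abs_le.1 (hKbnd t ht)).1; simp; linarith)
  have huanti : AntitoneOn (fun s => u s - K * s) (Ici 0) := myAntiOn (convex_Ici 0)
    (fun t ht => (hu' t ht).sub ((hasDerivAt_id t).const_mul K))
    (fun t ht => by have h1 := (abs_le.1 (hKbnd t ht)).2; simp; linarith)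
  -- u tends to zero
  have hu0 : Tendsto u atTop (𝓝 0) := by
    clear_value u Mu Mh Mc E F K
    by_contra hcon
    rw [Metric.tendsto_atTop] at hcon
    push_neg at hcon
    obtain ⟨ε, hε, hseq⟩ := hcon
    have hKne : K ≠ 0 := ne_of_gt hKpos
    obtain ⟨Δ, hΔ_def⟩ : ∃ Δ : ℝ, Δ = ε / (2 * K) := ⟨_, rfl⟩
    have hΔpos : 0 < Δ := by rw [hΔ_def]; exact div_pos hε (by linarith)
    have hKΔ : K * Δ = ε / 2 := by rw [hΔ_def]; field_simp
    obtain ⟨δ0, hδ0_def⟩ : ∃ d : ℝ, d = (ε / 2) ^ 2 * Δ := ⟨_, rfl⟩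
    have hδ0pos : 0 < δ0 := by
      rw [hδ0_def]; exact mul_pos (pow_pos (by linarith) 2) hΔpos
    have hgrow : ∀ n : ℕ, ∃ T, 0 ≤ T ∧ (n : ℝ) * δ0 ≤ F T := by
      intro n
      induction n with
      | zero => exact ⟨0, le_rfl, by simp [hF0]⟩
      | succ n ih =>
        obtain ⟨T, hT0, hTF⟩ := ih
        obtain ⟨t', ht'T, ht'ε⟩ := hseq T
        have ht'0 : (0:ℝ) ≤ t' := le_trans hT0 ht'T
        rw [Real.dist_eq, sub_zero] at ht'ε
        have hsq : ∀ s ∈ Icc t' (t' + Δ), (ε/2)^2 ≤ u s ^ 2 := by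
          intro s hs
          have hs0 : (0:ℝ) ≤ s := le_trans ht'0 hs.1
          have hd1 : u t' + K * t' ≤ u s + K * s :=
            humono (mem_Ici.2 ht'0) (mem_Ici.2 hs0) hs.1
          have hd2 : u s - K * s ≤ u t' - K * t' :=
            huanti (mem_Ici.2 ht'0) (mem_Ici.2 hs0) hs.1
          have hKs : K * (s - t') ≤ ε / 2 := by
            have h9 : s - t' ≤ Δ := by linarith [hs.2]
            calc K * (s - t') ≤ K * Δ := by nlinarith
            _ = ε / 2 := hKΔ
          have habs : ε / 2 ≤ |u s| := by
            rcases le_or_gt 0 (u t') with hpos | hneg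
            · have h10 : ε ≤ u t' := by rwa [abs_of_nonneg hpos] at ht'ε
              have h11 : u t' - K * (s - t') ≤ u s := by linarith
              have h12 : ε / 2 ≤ u s := by linarith
              exact le_trans h12 (le_abs_self _)
            · have h10 : ε ≤ -u t' := by rwa [abs_of_neg hneg] at ht'ε
              have h11 : u s ≤ u t' + K * (s - t') := by linarith
              have h12 : u s ≤ -(ε / 2) := by linarith
              have h13 : ε / 2 ≤ -u s := by linarith
              exact le_trans h13 (neg_le_abs _)
          calc (ε/2)^2 ≤ |u s| ^ 2 := by
                have := abs_nonneg (u s); nlinarith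
          _ = u s ^ 2 := sq_abs _
        have hmono3 : MonotoneOn (fun s => F s - (ε/2)^2 * s) (Icc t' (t' + Δ)) :=
          myMonoOn (convex_Icc _ _)
            (fun s hs => (hF' s (le_trans ht'0 hs.1)).sub ((hasDerivAt_id s).const_mul ((ε/2)^2)))
            (fun s hs => by have h9 := hsq s hs; simp; linarith)
        have h4 : F t' - (ε/2)^2 * t' ≤ F (t' + Δ) - (ε/2)^2 * (t' + Δ) :=
          hmono3 (Set.left_mem_Icc.2 (by linarith)) (Set.right_mem_Icc.2 (by linarith))
            (by linarith)
        have h5 : F T ≤ F t' := hFmono (mem_Ici.2 hT0) (mem_Ici.2 ht'0) ht'T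
        refine ⟨t' + Δ, by linarith, ?_⟩
        push_cast
        rw [hδ0_def] at hTF ⊢
        nlinarith
    obtain ⟨n, hn⟩ := exists_nat_gt (E 0 / (μ * δ0))
    obtain ⟨T, hT0, hTF⟩ := hgrow n
    have h6 := hFbd T hT0
    have h7 : 0 < μ * δ0 := mul_pos hμ hδ0pos
    rw [div_lt_iff₀ h7] at hn
    nlinarith
  -- limit of E
  clear hF hF' hFmono hEFanti hF0 hFbd hucont hKbnd humono huanti hK1 hMhnn hMh hE'
  clear_value u Mu Mh Mc E F K
  clear hKpos hK_def hF_def hMh_def hMc_def hMu_def F K Mh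
  obtain ⟨Einf, hEinf_def⟩ : ∃ e : ℝ, e = sInf (E '' Ici 0) := ⟨_, rfl⟩
  have hne : (E '' Ici 0).Nonempty := ⟨E 0, ⟨0, self_mem_Ici, rfl⟩⟩
  have hbddE : BddBelow (E '' Ici 0) := by
    refine ⟨0, ?_⟩; rintro y ⟨t, ht, rfl⟩; exact hEnn t ht
  have hEinf_nonneg : 0 ≤ Einf := by
    rw [hEinf_def]; exact le_csInf hne (by rintro y ⟨t, ht, rfl⟩; exact hEnn t ht)
  have hEle : ∀ t, 0 ≤ t → Einf ≤ E t := by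
    intro t ht; rw [hEinf_def]; exact csInf_le hbddE ⟨t, ht, rfl⟩
  have hEtend : Tendsto E atTop (𝓝 Einf) := by
    rw [Metric.tendsto_atTop]
    intro ε hε
    have h1 : sInf (E '' Ici 0) < Einf + ε := by rw [← hEinf_def]; linarith
    obtain ⟨y, ⟨t0, ht0, rfl⟩, hy⟩ := (csInf_lt_iff hbddE hne).1 h1
    refine ⟨max t0 0, fun t ht => ?_⟩
    have ht0' : (0:ℝ) ≤ t := le_trans (le_max_right _ _) ht
    have h2 : E t ≤ E t0 := hEanti ht0 (mem_Ici.2 ht0') (le_trans (le_max_left _ _) ht)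
    have h3 : Einf ≤ E t := hEle t ht0'
    rw [Real.dist_eq, abs_of_nonneg (by linarith)]
    linarith
  -- H along the trajectory tends to Einf
  have hHtend : Tendsto (fun t => Hfn μ ν β g Ie (I t)) atTop (𝓝 Einf) := by
    have h2 : Tendsto (fun t => u t ^ 2 / 2) atTop (𝓝 0) := by
      have h3 := (hu0.mul hu0).div_const 2
      simp only [mul_zero, zero_div] at h3
      have h5 : (fun t => u t ^ 2 / 2) = fun t => u t * u t / 2 := by funext t; ring
      rw [h5]; exact h3
    have h4 := hEtend.sub h2
    rw [sub_zero] at h4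
    have h5 : (fun t => Hfn μ ν β g Ie (I t)) = fun t => E t - u t ^ 2 / 2 := by
      funext t; simp only [hE_def]; ring
    rw [h5]; exact h4
  have hHantiOn := Hfn_strictAntiOn hβC1 hgC1 hβpos hβ' hg' hμ hν hIe.1 hhIe
  have hHmonoOn := Hfn_strictMonoOn hβC1 hgC1 hβpos hβ' hg' hμ hν hIe.1 hhIe
  have hfnanti := hfn_strictAnti hβC1 hgC1 hβpos hβ' hg' hμ hν
  have hMcpos : (0:ℝ) < Mc := lt_of_lt_of_le one_pos hMc1
  -- the limit of E must be 0
  have hEinf0 : Einf = 0 := by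
    rcases eq_or_lt_of_le hEinf_nonneg with h | hEpos
    · exact h.symm
    exfalso
    have hHcont : ContinuousAt (Hfn μ ν β g Ie) Ie :=
      (hasDerivAt_Hfn (μ := μ) (ν := ν) hβC1 hgC1 hβpos hIe.1 hIe.1).continuousAt
    rw [Metric.continuousAt_iff] at hHcont
    obtain ⟨δ, hδ, hball⟩ := hHcont (Einf/2) (by linarith)
    obtain ⟨ε1, hε1_def⟩ : ∃ e : ℝ, e = min (δ/2) (Ie/2) := ⟨_, rfl⟩
    have hε1pos : 0 < ε1 := by
      rw [hε1_def]; exact lt_min (by linarith) (by linarith [hIe.1])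
    have hε1a : ε1 < δ := by
      rw [hε1_def]
      calc min (δ/2) (Ie/2) ≤ δ/2 := min_le_left _ _
      _ < δ := by linarith
    have hε1b : ε1 ≤ Ie/2 := by rw [hε1_def]; exact min_le_right _ _
    have hIme : 0 < Ie - ε1 := by
      have := hIe.1; linarith
    have hH1 : Hfn μ ν β g Ie (Ie - ε1) < Einf/2 := by
      have h9 := hball (x := Ie - ε1) (by
        rw [Real.dist_eq]
        have : Ie - ε1 - Ie = -ε1 := by ring
        rw [this, abs_neg, abs_of_pos hε1pos]
        exact hε1a)
      rw [Real.dist_eq, Hfn_Ie, sub_zero] at h9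
      exact lt_of_le_of_lt (le_abs_self _) h9
    have hH2 : Hfn μ ν β g Ie (Ie + ε1) < Einf/2 := by
      have h9 := hball (x := Ie + ε1) (by
        rw [Real.dist_eq]
        have : Ie + ε1 - Ie = ε1 := by ring
        rw [this, abs_of_pos hε1pos]
        exact hε1a)
      rw [Real.dist_eq, Hfn_Ie, sub_zero] at h9
      exact lt_of_le_of_lt (le_abs_self _) h9
    rw [Metric.tendsto_atTop] at hHtend
    obtain ⟨T0, hT0⟩ := hHtend (Einf/2) (by linarith)
    obtain ⟨T, hT_def⟩ : ∃ x : ℝ, x = max T0 0 := ⟨_, rfl⟩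
    have hTnn : 0 ≤ T := by rw [hT_def]; exact le_max_right _ _
    have hfar : ∀ t, T ≤ t → Einf/2 < Hfn μ ν β g Ie (I t) := by
      intro t ht
      have h9 := hT0 t (le_trans (by rw [hT_def]; exact le_max_left _ _) ht)
      rw [Real.dist_eq] at h9
      have h10 := (abs_lt.1 h9).1
      linarith
    have hItne : ∀ t, T ≤ t → I t ∉ Icc (Ie - ε1) (Ie + ε1) := by
      intro t ht hmem
      have htnn : (0:ℝ) ≤ t := le_trans hTnn ht
      have hH3 : Hfn μ ν β g Ie (I t) < Einf/2 := by
        rcases le_total (I t) Ie with hle | hge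
        · have h4 : Hfn μ ν β g Ie (I t) ≤ Hfn μ ν β g Ie (Ie - ε1) :=
            hHantiOn.antitoneOn ⟨hIme, by linarith [hmem.1]⟩
              ⟨hIpos t htnn, hle⟩ hmem.1
          linarith
        · have h4 : Hfn μ ν β g Ie (I t) ≤ Hfn μ ν β g Ie (Ie + ε1) :=
            hHmonoOn.monotoneOn (mem_Ici.2 hge) (mem_Ici.2 (by linarith)) hmem.2
          linarith
      linarith [hfar t ht]
    have hIne : ∀ t, T ≤ t → I t ≠ Ie := by
      intro t ht h
      exact hItne t ht (by rw [h]; exact ⟨by linarith, by linarith⟩)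
    rw [Metric.tendsto_atTop] at hu0
    rcases lt_or_gt_of_ne (hIne T le_rfl) with hlt | hgt
    · -- the trajectory stays below the equilibrium : contradiction via growth of u
      have hstay : ∀ t, T ≤ t → I t < Ie := by
        intro t ht
        by_contra hge
        push_neg at hge
        obtain ⟨s, hsmem, hsIe⟩ := intermediate_value_Icc ht
          (hIcont.mono (fun x hx => le_trans hTnn hx.1))
          (⟨le_of_lt hlt, hge⟩ : Ie ∈ Icc (I T) (I t))
        exact hIne s hsmem.1 hsIe
      have hstay2 : ∀ t, T ≤ t → I t ≤ Ie - ε1 := by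
        intro t ht
        by_contra hgt2
        push_neg at hgt2
        exact hItne t ht ⟨le_of_lt hgt2, by linarith [hstay t ht]⟩
      obtain ⟨δ2, hδ2_def⟩ : ∃ d : ℝ, d = hfn μ ν β g (Ie - ε1) / 2 := ⟨_, rfl⟩
      have hδ2pos : 0 < δ2 := by
        rw [hδ2_def]
        have h9 := hfnanti (show Ie - ε1 < Ie by linarith)
        rw [hhIe] at h9
        linarith
      have hh2 : ∀ t, T ≤ t → 2 * δ2 ≤ hfn μ ν β g (I t) := by
        intro t ht
        have h1 : hfn μ ν β g (Ie - ε1) ≤ hfn μ ν β g (I t) :=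
          hfnanti.antitone (hstay2 t ht)
        rw [hδ2_def] at *
        linarith
      obtain ⟨T2', hT2'⟩ := hu0 (δ2 / Mc) (div_pos hδ2pos hMcpos)
      obtain ⟨T2, hT2_def⟩ : ∃ x : ℝ, x = max T2' T := ⟨_, rfl⟩
      have hT2a : T ≤ T2 := by rw [hT2_def]; exact le_max_right _ _
      have hT2nn : 0 ≤ T2 := le_trans hTnn hT2a
      have husmall : ∀ t, T2 ≤ t → |u t| < δ2 / Mc := by
        intro t ht
        have h9 := hT2' t (le_trans (by rw [hT2_def]; exact le_max_left _ _) ht)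
        rwa [Real.dist_eq, sub_zero] at h9
      have hder : ∀ t, T2 ≤ t → δ2 ≤ hfn μ ν β g (I t) - cfn μ ν β g (I t) * u t := by
        intro t ht
        have h1 := hh2 t (le_trans hT2a ht)
        have h2 : |cfn μ ν β g (I t) * u t| ≤ δ2 := by
          rw [abs_mul]
          have h3 : |cfn μ ν β g (I t)| ≤ Mc := hMc _ (hImem t (le_trans hT2nn ht))
          have h4 : |u t| ≤ δ2 / Mc := le_of_lt (husmall t ht)
          calc |cfn μ ν β g (I t)| * |u t| ≤ Mc * (δ2 / Mc) :=
                mul_le_mul h3 h4 (abs_nonneg _) (by linarith)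
          _ = δ2 := by field_simp
        have h5 := (abs_le.1 h2).2
        linarith
      have hmono4 : MonotoneOn (fun t => u t - δ2 * t) (Ici T2) := myMonoOn (convex_Ici T2)
        (fun t ht => (hu' t (le_trans hT2nn ht)).sub ((hasDerivAt_id t).const_mul δ2))
        (fun t ht => by
          have h9 := hder t ht
          simp only [mul_one]
          linarith)
      obtain ⟨t3, ht3_def⟩ : ∃ x : ℝ, x = T2 + (2 * Mu + 1) / δ2 := ⟨_, rfl⟩
      have ht3a : T2 ≤ t3 := by
        rw [ht3_def]
        have : 0 < (2 * Mu + 1) / δ2 := div_pos (by linarith) hδ2pos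
        linarith
      have h5 : u T2 - δ2 * T2 ≤ u t3 - δ2 * t3 :=
        hmono4 self_mem_Ici (mem_Ici.2 ht3a) ht3a
      have h6 : δ2 * (t3 - T2) = 2 * Mu + 1 := by
        rw [ht3_def]
        field_simp
        ring
      have h7 := abs_le.1 (hubnd t3 (le_trans hT2nn ht3a))
      have h8 := abs_le.1 (hubnd T2 hT2nn)
      nlinarith [h5, h6, h7.1, h7.2, h8.1, h8.2]
    · -- the trajectory stays above the equilibrium : contradiction
      have hstay : ∀ t, T ≤ t → Ie < I t := by
        intro t ht
        by_contra hge
        push_neg at hge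
        obtain ⟨s, hsmem, hsIe⟩ := intermediate_value_Icc' ht
          (hIcont.mono (fun x hx => le_trans hTnn hx.1))
          (⟨hge, le_of_lt hgt⟩ : Ie ∈ Icc (I t) (I T))
        exact hIne s hsmem.1 hsIe
      have hstay2 : ∀ t, T ≤ t → Ie + ε1 ≤ I t := by
        intro t ht
        by_contra hgt2
        push_neg at hgt2
        exact hItne t ht ⟨by linarith [hstay t ht], le_of_lt hgt2⟩
      obtain ⟨δ2, hδ2_def⟩ : ∃ d : ℝ, d = -(hfn μ ν β g (Ie + ε1)) / 2 := ⟨_, rfl⟩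
      have hδ2pos : 0 < δ2 := by
        rw [hδ2_def]
        have h9 := hfnanti (show Ie < Ie + ε1 by linarith)
        rw [hhIe] at h9
        linarith
      have hh2 : ∀ t, T ≤ t → hfn μ ν β g (I t) ≤ -(2 * δ2) := by
        intro t ht
        have h1 : hfn μ ν β g (I t) ≤ hfn μ ν β g (Ie + ε1) :=
          hfnanti.antitone (hstay2 t ht)
        rw [hδ2_def] at *
        linarith
      obtain ⟨T2', hT2'⟩ := hu0 (δ2 / Mc) (div_pos hδ2pos hMcpos)
      obtain ⟨T2, hT2_def⟩ : ∃ x : ℝ, x = max T2' T := ⟨_, rfl⟩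
      have hT2a : T ≤ T2 := by rw [hT2_def]; exact le_max_right _ _
      have hT2nn : 0 ≤ T2 := le_trans hTnn hT2a
      have husmall : ∀ t, T2 ≤ t → |u t| < δ2 / Mc := by
        intro t ht
        have h9 := hT2' t (le_trans (by rw [hT2_def]; exact le_max_left _ _) ht)
        rwa [Real.dist_eq, sub_zero] at h9
      have hder : ∀ t, T2 ≤ t → hfn μ ν β g (I t) - cfn μ ν β g (I t) * u t ≤ -δ2 := by
        intro t ht
        have h1 := hh2 t (le_trans hT2a ht)
        have h2 : |cfn μ ν β g (I t) * u t| ≤ δ2 := by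
          rw [abs_mul]
          have h3 : |cfn μ ν β g (I t)| ≤ Mc := hMc _ (hImem t (le_trans hT2nn ht))
          have h4 : |u t| ≤ δ2 / Mc := le_of_lt (husmall t ht)
          calc |cfn μ ν β g (I t)| * |u t| ≤ Mc * (δ2 / Mc) :=
                mul_le_mul h3 h4 (abs_nonneg _) (by linarith)
          _ = δ2 := by field_simp
        have h5 := (abs_le.1 h2).1
        linarith
      have hanti4 : AntitoneOn (fun t => u t + δ2 * t) (Ici T2) := myAntiOn (convex_Ici T2)
        (fun t ht => (hu' t (le_trans hT2nn ht)).add ((hasDerivAt_id t).const_mul δ2))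
        (fun t ht => by
          have h9 := hder t ht
          simp only [mul_one]
          linarith)
      obtain ⟨t3, ht3_def⟩ : ∃ x : ℝ, x = T2 + (2 * Mu + 1) / δ2 := ⟨_, rfl⟩
      have ht3a : T2 ≤ t3 := by
        rw [ht3_def]
        have : 0 < (2 * Mu + 1) / δ2 := div_pos (by linarith) hδ2pos
        linarith
      have h5 : u t3 + δ2 * t3 ≤ u T2 + δ2 * T2 :=
        hanti4 self_mem_Ici (mem_Ici.2 ht3a) ht3a
      have h6 : δ2 * (t3 - T2) = 2 * Mu + 1 := by
        rw [ht3_def]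
        field_simp
        ring
      have h7 := abs_le.1 (hubnd t3 (le_trans hT2nn ht3a))
      have h8 := abs_le.1 (hubnd T2 hT2nn)
      nlinarith [h5, h6, h7.1, h7.2, h8.1, h8.2]
  -- convergence of I
  have hItend : Tendsto I atTop (𝓝 Ie) := by
    rw [Metric.tendsto_atTop]
    intro ε hε
    obtain ⟨ε1, hε1_def⟩ : ∃ e : ℝ, e = min (ε/2) (Ie/2) := ⟨_, rfl⟩
    have hε1pos : 0 < ε1 := by
      rw [hε1_def]; exact lt_min (by linarith) (by linarith [hIe.1])
    have hε1a : ε1 ≤ ε/2 := by rw [hε1_def]; exact min_le_left _ _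
    have hε1b : ε1 ≤ Ie/2 := by rw [hε1_def]; exact min_le_right _ _
    have hIme : 0 < Ie - ε1 := by have := hIe.1; linarith
    have hH1 : 0 < Hfn μ ν β g Ie (Ie - ε1) := by
      have h9 := hHantiOn ⟨hIme, by linarith⟩ ⟨hIe.1, le_rfl⟩ (by linarith)
      rw [Hfn_Ie] at h9
      exact h9
    have hH2 : 0 < Hfn μ ν β g Ie (Ie + ε1) := by
      have h9 := hHmonoOn (mem_Ici.2 (le_refl Ie))
        (mem_Ici.2 (show Ie ≤ Ie + ε1 by linarith)) (show Ie < Ie + ε1 by linarith)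
      rw [Hfn_Ie] at h9
      exact h9
    obtain ⟨δ, hδ_def⟩ : ∃ d : ℝ,
        d = min (Hfn μ ν β g Ie (Ie - ε1)) (Hfn μ ν β g Ie (Ie + ε1)) := ⟨_, rfl⟩
    have hδpos : 0 < δ := by rw [hδ_def]; exact lt_min hH1 hH2
    rw [hEinf0, Metric.tendsto_atTop] at hHtend
    obtain ⟨T0, hT0⟩ := hHtend δ hδpos
    refine ⟨max T0 0, fun t ht => ?_⟩
    have htnn : (0:ℝ) ≤ t := le_trans (le_max_right _ _) ht
    have h1 := hT0 t (le_trans (le_max_left _ _) ht)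
    rw [Real.dist_eq, sub_zero] at h1
    have h2 : Hfn μ ν β g Ie (I t) < δ := lt_of_le_of_lt (le_abs_self _) h1
    have h3 : Ie - ε1 < I t := by
      by_contra hc
      push_neg at hc
      have h4 : Hfn μ ν β g Ie (Ie - ε1) ≤ Hfn μ ν β g Ie (I t) :=
        hHantiOn.antitoneOn ⟨hIpos t htnn, by linarith⟩ ⟨hIme, by linarith⟩ hc
      rw [hδ_def] at h2
      have h5 := min_le_left (Hfn μ ν β g Ie (Ie - ε1)) (Hfn μ ν β g Ie (Ie + ε1))
      linarith
    have h5 : I t < Ie + ε1 := by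
      by_contra hc
      push_neg at hc
      have h4 : Hfn μ ν β g Ie (Ie + ε1) ≤ Hfn μ ν β g Ie (I t) :=
        hHmonoOn.monotoneOn (mem_Ici.2 (by linarith)) (mem_Ici.2 (by linarith)) hc
      rw [hδ_def] at h2
      have h6 := min_le_right (Hfn μ ν β g Ie (Ie - ε1)) (Hfn μ ν β g Ie (Ie + ε1))
      linarith
    rw [Real.dist_eq, abs_lt]
    constructor <;> linarith
  -- convergence of S
  have hsgmIe : sgm μ ν β g Ie = Se := by rw [hSe]; rfl
  have hsgmcont : ContinuousAt (sgm μ ν β g) Ie :=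
    (hasDerivAt_sgm (μ := μ) (ν := ν) hβC1 hgC1 hβpos Ie).continuousAt
  have h6 : Tendsto (fun t => sgm μ ν β g (I t)) atTop (𝓝 (sgm μ ν β g Ie)) :=
    hsgmcont.tendsto.comp hItend
  have h7 := hu0.add h6
  rw [zero_add, hsgmIe] at h7
  have h8 : (fun t => u t + sgm μ ν β g (I t)) = S := by
    funext t; simp only [hu_def]; ring
  rw [h8] at h7
  exact ⟨h7, hItend⟩
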